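/- arXiv:2102.07189 — 19 statements merged into one kernel-verified Lean document; each statement's English description precedes it below -/
import Mathlib

section
/- Every 1-absorbing δ-primary ideal of R is a 2-absorbing δ-primary ideal of R; that is, if I is a 1-absorbing δ-primary ideal of R and a, b, c ∈ R satisfy abc ∈ I, then ab ∈ I or ac ∈ δ(I) or bc ∈ δ(I). -/
open Ideal

/-- `δ` is an expansion function of the ideals of `R`. -/
def ExpansionFunction (R : Type*) [CommRing R] (δ : Ideal R → Ideal R) : Prop :=
  (∀ I : Ideal R, I ≤ δ I) ∧ ∀ I J : Ideal R, J ≤ I → δ J ≤ δ I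

/-- A proper ideal `I` of `R` is 1-absorbing δ-primary if whenever nonunit elements
`a, b, c` satisfy `a * b * c ∈ I`, then `a * b ∈ I` or `c ∈ δ I`. -/
def IsOneAbsDeltaPrimary {R : Type*} [CommRing R] (δ : Ideal R → Ideal R) (I : Ideal R) : Prop :=
  I ≠ ⊤ ∧ ∀ a b c : R, ¬ IsUnit a → ¬ IsUnit b → ¬ IsUnit c →
    a * b * c ∈ I → a * b ∈ I ∨ c ∈ δ I

/-- A proper ideal `I` of `R` is δ-primary if whenever `a * b ∈ I`,
then `a ∈ I` or `b ∈ δ I`. -/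
def IsDeltaPrimary {R : Type*} [CommRing R] (δ : Ideal R → Ideal R) (I : Ideal R) : Prop :=
  I ≠ ⊤ ∧ ∀ a b : R, a * b ∈ I → a ∈ I ∨ b ∈ δ I

/-- A proper ideal `I` of `R` is δ-semiprimary if whenever `a * b ∈ I`,
then `a ∈ δ I` or `b ∈ δ I`. -/
def IsDeltaSemiprimary {R : Type*} [CommRing R] (δ : Ideal R → Ideal R) (I : Ideal R) : Prop :=
  I ≠ ⊤ ∧ ∀ a b : R, a * b ∈ I → a ∈ δ I ∨ b ∈ δ I

/-- A proper ideal `I` of `R` is 1-absorbing prime if whenever nonunit elements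
`a, b, c` satisfy `a * b * c ∈ I`, then `a * b ∈ I` or `c ∈ I`. -/
def IsOneAbsPrime {R : Type*} [CommRing R] (I : Ideal R) : Prop :=
  I ≠ ⊤ ∧ ∀ a b c : R, ¬ IsUnit a → ¬ IsUnit b → ¬ IsUnit c →
    a * b * c ∈ I → a * b ∈ I ∨ c ∈ I

theorem one_abs_delta_primary_is_two_abs_delta_primary
    {R : Type*} [CommRing R] [Nontrivial R]
    (δ : Ideal R → Ideal R) (hδ : ExpansionFunction R δ)
    (I : Ideal R) (hI : IsOneAbsDeltaPrimary δ I) :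
    I ≠ ⊤ ∧ ∀ a b c : R, a * b * c ∈ I →
      a * b ∈ I ∨ a * c ∈ δ I ∨ b * c ∈ δ I := by
  refine ⟨hI.1, fun a b c habc => ?_⟩
  by_cases ha : IsUnit a
  · obtain ⟨u, rfl⟩ := ha
    right; right
    have : b * c = ↑u⁻¹ * (↑u * b * c) := by
      linear_combination (-(b * c)) * u.inv_mul
    rw [this]
    exact hδ.1 I (I.mul_mem_left _ habc)
  by_cases hb : IsUnit b
  · obtain ⟨u, rfl⟩ := hb
    right; left
    have : a * c = ↑u⁻¹ * (a * ↑u * c) := by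
      linear_combination (-(a * c)) * u.inv_mul
    rw [this]
    exact hδ.1 I (I.mul_mem_left _ habc)
  by_cases hc : IsUnit c
  · obtain ⟨u, rfl⟩ := hc
    left
    have : a * b = ↑u⁻¹ * (a * b * ↑u) := by
      linear_combination (-(a * b)) * u.inv_mul
    rw [this]
    exact I.mul_mem_left _ habc
  rcases hI.2 a b c ha hb hc habc with h | h
  · exact Or.inl h
  · exact Or.inr (Or.inl ((δ I).mul_mem_left a h))
end

section
/- If I is a 1-absorbing δ-primary ideal of R and δ(I) is a radical ideal (i.e., √(δ(I)) = δ(I)), then I is a δ-semiprimary ideal of R. -/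
open Ideal

theorem one_abs_delta_primary_radical_delta_is_semiprimary
    {R : Type*} [CommRing R] [Nontrivial R]
    (δ : Ideal R → Ideal R) (hδ : ExpansionFunction R δ)
    (I : Ideal R) (hI : IsOneAbsDeltaPrimary δ I)
    (hrad : (δ I).radical = δ I) :
    IsDeltaSemiprimary δ I := by
  obtain ⟨hne, h1⟩ := hI
  refine ⟨hne, fun a b hab => ?_⟩
  by_cases ha : IsUnit a
  · right
    have : b ∈ I := by
      have := I.mul_mem_left (↑ha.unit⁻¹) hab
      rwa [← mul_assoc, IsUnit.val_inv_mul, one_mul] at this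
    exact hδ.1 I this
  by_cases hb : IsUnit b
  · left
    have : a ∈ I := by
      have := I.mul_mem_left (↑hb.unit⁻¹) hab
      rwa [mul_comm a b, ← mul_assoc, IsUnit.val_inv_mul, one_mul] at this
    exact hδ.1 I this
  have h2 : a * a * b ∈ I := by
    have := I.mul_mem_left a hab
    rwa [← mul_assoc] at this
  rcases h1 a a b ha ha hb h2 with h | h
  · left
    have : a ∈ (δ I).radical := ⟨2, by simpa [pow_two] using hδ.1 I h⟩
    rwa [hrad] at this
  · right; exact h
end

section
/- If a commutative ring R admits a 1-absorbing δ-primary ideal that is not a δ-primary ideal, then R is a local ring. -/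
open Ideal

theorem local_of_exists_one_abs_delta_primary_not_delta_primary
    {R : Type*} [CommRing R] [Nontrivial R]
    (δ : Ideal R → Ideal R) (hδ : ExpansionFunction R δ)
    (h : ∃ I : Ideal R, IsOneAbsDeltaPrimary δ I ∧ ¬ IsDeltaPrimary δ I) :
    IsLocalRing R := by
  obtain ⟨I, ⟨hIne, h1⟩, hnot⟩ := h
  rw [IsDeltaPrimary, not_and_or] at hnot
  rcases hnot with hnot | hnot
  · exact absurd hIne hnot
  push_neg at hnot
  obtain ⟨a, b, hab, ha, hb⟩ := hnot
  have hau : ¬ IsUnit a := by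
    intro hu
    obtain ⟨v, hv⟩ := hu.exists_left_inv
    have : b ∈ I := by
      have := I.mul_mem_left v hab
      rwa [← mul_assoc, hv, one_mul] at this
    exact hb (hδ.1 I this)
  have hbu : ¬ IsUnit b := by
    intro hu
    obtain ⟨v, hv⟩ := hu.exists_right_inv
    have : a ∈ I := by
      have := I.mul_mem_right v hab
      rwa [mul_assoc, hv, mul_one] at this
    exact ha this
  have key : ∀ x : R, ¬ IsUnit x → x * a ∈ I := by
    intro x hx
    have hxab : x * a * b ∈ I := by
      rw [mul_assoc]; exact I.mul_mem_left x hab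
    rcases h1 x a b hx hau hbu hxab with h' | h'
    · exact h'
    · exact absurd h' hb
  apply IsLocalRing.of_nonunits_add
  intro x y hx hy hxy
  obtain ⟨v, hv⟩ := (hxy : IsUnit (x + y)).exists_right_inv
  have hmem : (x + y) * a ∈ I := by
    rw [add_mul]; exact I.add_mem (key x hx) (key y hy)
  have : a ∈ I := by
    have hm := I.mul_mem_right v hmem
    have heq : (x + y) * a * v = a := by
      rw [mul_right_comm, hv, one_mul]
    rwa [heq] at hm
  exact ha this
end

section
/- Let R be a local ring with maximal ideal M and let x be a nonzero prime element of R such that δ(xM) is strictly contained in M. If x ∈ δ(xM), then the ideal xM is a 1-absorbing δ-primary ideal of R that is not a δ-primary ideal of R. -/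
open Ideal

theorem prime_mul_maximal_one_abs_delta_primary_not_delta_primary
    {R : Type*} [CommRing R] [IsLocalRing R]
    (δ : Ideal R → Ideal R) (hδ : ExpansionFunction R δ)
    (x : R) (hx : Prime x)
    (hlt : δ (span {x} * IsLocalRing.maximalIdeal R) < IsLocalRing.maximalIdeal R)
    (hmem : x ∈ δ (span {x} * IsLocalRing.maximalIdeal R)) :
    IsOneAbsDeltaPrimary δ (span {x} * IsLocalRing.maximalIdeal R) ∧
      ¬ IsDeltaPrimary δ (span {x} * IsLocalRing.maximalIdeal R) := by
  set M := IsLocalRing.maximalIdeal R with hM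
  set I := span {x} * M with hI
  have hIM : I ≤ M := Ideal.mul_le_right
  have hIx : I ≤ span {x} := Ideal.mul_le_left
  have hInt : I ≠ ⊤ := fun h =>
    (IsLocalRing.maximalIdeal.isMaximal R).ne_top (top_le_iff.mp (h ▸ hIM))
  have hxI : x ∉ I := by
    intro h
    rw [hI, Ideal.mem_span_singleton_mul] at h
    obtain ⟨m, hm, hxm⟩ := h
    have hu : IsUnit (1 - m) := IsLocalRing.isUnit_one_sub_self_of_mem_nonunits m hm
    have h0 : x * (1 - m) = 0 := by rw [mul_sub, mul_one, hxm, sub_self]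
    exact hx.ne_zero ((hu.mul_left_eq_zero).mp h0)
  constructor
  · refine ⟨hInt, fun a b c ha hb hc habc => ?_⟩
    have hdvd : x ∣ a * b * c := (Ideal.mem_span_singleton).mp (hIx habc)
    rcases hx.dvd_mul.mp hdvd with h | h
    · rcases hx.dvd_mul.mp h with h' | h'
      · obtain ⟨t, rfl⟩ := h'
        left
        rw [hI, Ideal.mem_span_singleton_mul]
        exact ⟨t * b, Ideal.mul_mem_left _ _ hb, by ring⟩
      · obtain ⟨t, rfl⟩ := h'
        left
        rw [hI, Ideal.mem_span_singleton_mul]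
        exact ⟨t * a, Ideal.mul_mem_left _ _ ha, by ring⟩
    · obtain ⟨t, rfl⟩ := h
      right
      rw [mul_comm]
      exact Ideal.mul_mem_left _ _ hmem
  · rintro ⟨-, h⟩
    obtain ⟨y, hyM, hyδ⟩ := SetLike.exists_of_lt hlt
    have hxy : x * y ∈ I := by
      rw [hI, Ideal.mem_span_singleton_mul]
      exact ⟨y, hyM, rfl⟩
    rcases h x y hxy with h' | h'
    · exact hxI h'
    · exact hyδ h'
end

section
/- Let I be a 1-absorbing δ-primary ideal of R and let d ∈ R \ I be a nonunit element of R. Then the ideal quotient (I : d) = {x ∈ R : dx ∈ I} is a δ-primary ideal of R. -/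
open Ideal

theorem colon_of_one_abs_delta_primary_is_delta_primary
    {R : Type*} [CommRing R] [Nontrivial R]
    (δ : Ideal R → Ideal R) (hδ : ExpansionFunction R δ)
    (I : Ideal R) (hI : IsOneAbsDeltaPrimary δ I)
    (d : R) (hd : d ∉ I) (hdu : ¬ IsUnit d) :
    IsDeltaPrimary δ (I.colon (span {d})) := by
  have hIle : I ≤ I.colon (span {d}) := fun x hx => by
    rw [Ideal.mem_colon_span_singleton]; exact I.mul_mem_right d hx
  constructor
  · intro htop
    apply hd
    have : (1 : R) ∈ I.colon (span {d}) := htop ▸ Submodule.mem_top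
    simpa using (Ideal.mem_colon_span_singleton.mp this)
  · intro a b hab
    rw [Ideal.mem_colon_span_singleton] at hab
    by_cases ha : IsUnit a
    · right
      apply hδ.1
      rw [Ideal.mem_colon_span_singleton]
      obtain ⟨u, rfl⟩ := ha
      have : (↑u⁻¹ : R) * (↑u * b * d) ∈ I := I.mul_mem_left _ hab
      simpa [mul_assoc, ← mul_assoc (↑u⁻¹ : R)] using this
    by_cases hb : IsUnit b
    · left
      rw [Ideal.mem_colon_span_singleton]
      obtain ⟨u, rfl⟩ := hb
      have : (↑u⁻¹ : R) * (a * ↑u * d) ∈ I := I.mul_mem_left _ hab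
      have h2 : a * d ∈ I := by
        have e : (↑u⁻¹ : R) * (a * ↑u * d) = a * d := by
          linear_combination (a * d) * u.inv_mul
        rwa [e] at this
      exact h2
    · have := hI.2 d a b hdu ha hb (by rw [show d * a * b = a * b * d by ring]; exact hab)
      rcases this with h | h
      · left; rw [Ideal.mem_colon_span_singleton, mul_comm]; exact h
      · right; exact hδ.2 _ _ hIle h
end

section
/- If I is a 1-absorbing δ-primary ideal of R, then either I is a δ-semiprimary ideal of R, or R is a local ring whose maximal ideal M satisfies M² ⊆ I. -/
open Ideal

theorem one_abs_delta_primary_semiprimary_or_local_sq_le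
    {R : Type*} [CommRing R] [Nontrivial R]
    (δ : Ideal R → Ideal R) (hδ : ExpansionFunction R δ)
    (I : Ideal R) (hI : IsOneAbsDeltaPrimary δ I) :
    IsDeltaSemiprimary δ I ∨
      ∃ M : Ideal R, M.IsMaximal ∧ (∀ M' : Ideal R, M'.IsMaximal → M' = M) ∧
        M ^ 2 ≤ I := by

  obtain ⟨hIne, hI1⟩ := hI
  by_cases hs : IsDeltaSemiprimary δ I
  · exact Or.inl hs
  right
  have : ∃ a b : R, a * b ∈ I ∧ a ∉ δ I ∧ b ∉ δ I := by
    by_contra h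
    push_neg at h
    exact hs ⟨hIne, fun a b hab => by
      by_cases haI : a ∈ δ I
      · exact Or.inl haI
      · exact Or.inr (h a b hab haI)⟩
  obtain ⟨a, b, hab, haδ, hbδ⟩ := this
  have ha : ¬ IsUnit a := by
    intro h
    obtain ⟨c, hc⟩ := h.exists_left_inv
    exact hbδ (hδ.1 I (by simpa [← mul_assoc, hc] using I.mul_mem_left c hab))
  have hb : ¬ IsUnit b := by
    intro h
    obtain ⟨c, hc⟩ := h.exists_left_inv
    exact haδ (hδ.1 I (by
      have : c * (a * b) ∈ I := I.mul_mem_left c hab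
      have h2 : c * (a * b) = a * (c * b) := by ring
      rwa [h2, hc, mul_one] at this))
  -- key: for any nonunit c, a * c ∈ I
  have key : ∀ c : R, ¬ IsUnit c → a * c ∈ I := by
    intro c hc
    rcases hI1 a c b ha hc hb (by rw [show a * c * b = a * b * c by ring]; exact I.mul_mem_right c hab) with h | h
    · exact h
    · exact absurd h hbδ
  -- products of nonunits lie in I
  have key2 : ∀ x y : R, ¬ IsUnit x → ¬ IsUnit y → x * y ∈ I := by
    intro x y hx hy
    rcases hI1 x y a hx hy ha (by rw [show x * y * a = a * x * y by ring]; exact I.mul_mem_right y (key x hx)) with h | h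
    · exact h
    · exact absurd h haδ
  have hadd : ∀ x y : R, x ∈ nonunits R → y ∈ nonunits R → x + y ∈ nonunits R := by
    intro x y hx hy
    intro hu
    apply haδ
    apply hδ.1 I
    obtain ⟨c, hc⟩ := hu.exists_left_inv
    have h1 : a * (x + y) ∈ I := by
      rw [mul_add]; exact I.add_mem (key x hx) (key y hy)
    have h2 : c * (a * (x + y)) = a * (c * (x + y)) := by ring
    have := I.mul_mem_left c h1
    rwa [h2, hc, mul_one] at this
  haveI : IsLocalRing R := IsLocalRing.of_nonunits_add hadd
  refine ⟨IsLocalRing.maximalIdeal R, inferInstance, fun M' hM' => IsLocalRing.eq_maximalIdeal hM', ?_⟩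
  rw [pow_two]
  exact Ideal.mul_le.mpr fun r hr s hs =>
    key2 r s (IsLocalRing.mem_maximalIdeal r |>.mp hr) (IsLocalRing.mem_maximalIdeal s |>.mp hs)
end

section
/- Let R be a chained ring with maximal ideal M and let I be a proper ideal of R with I ≠ M². Then I is a 1-absorbing δ-primary ideal of R if and only if I is a δ-primary ideal of R. -/
open Ideal

theorem chained_one_abs_delta_primary_iff_delta_primary
    {R : Type*} [CommRing R] [Nontrivial R]
    (hchain : ∀ I J : Ideal R, I ≤ J ∨ J ≤ I)
    (M : Ideal R) (hM : M.IsMaximal)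
    (δ : Ideal R → Ideal R) (hδ : ExpansionFunction R δ)
    (I : Ideal R) (hIproper : I ≠ ⊤) (hne : I ≠ M ^ 2) :
    IsOneAbsDeltaPrimary δ I ↔ IsDeltaPrimary δ I := by
  have hmemM : ∀ x : R, ¬IsUnit x → x ∈ M := by
    intro x hx
    rcases hchain (Ideal.span {x}) M with h | h
    · exact h (Ideal.mem_span_singleton_self x)
    · rcases hM.eq_of_le (by simpa [Ideal.span_singleton_eq_top] using hx) h with h'
      exact h' ▸ Ideal.mem_span_singleton_self x
  have hMnon : ∀ x : R, x ∈ M → ¬IsUnit x := by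
    intro x hx hu
    exact hM.ne_top (Ideal.eq_top_of_isUnit_mem M hx hu)
  constructor
  · rintro ⟨hItop, h1⟩
    refine ⟨hItop, ?_⟩
    by_contra hcon
    push_neg at hcon
    obtain ⟨a, b, hab, haI, hbδ⟩ := hcon
    have hbI : b ∉ I := fun h => hbδ (hδ.1 I h)
    have ha : ¬IsUnit a := by
      intro hu
      apply hbI
      have := I.mul_mem_left (↑hu.unit⁻¹) hab
      rwa [← mul_assoc, IsUnit.val_inv_mul, one_mul] at this
    have hb : ¬IsUnit b := by
      intro hu
      apply haI
      have := I.mul_mem_left (↑hu.unit⁻¹) hab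
      rwa [mul_comm a b, ← mul_assoc, IsUnit.val_inv_mul, one_mul] at this
    have haM : a ∈ M := hmemM a ha
    -- a * y ∈ I for every nonunit y
    have haMI : ∀ y : R, ¬IsUnit y → a * y ∈ I := by
      intro y hy
      have habc : a * y * b ∈ I := by
        have := I.mul_mem_right y hab
        rwa [mul_right_comm] at this
      exact (h1 a y b ha hy hb habc).resolve_right hbδ
    -- every nonunit lies in span {a}
    have hMa : ∀ x : R, ¬IsUnit x → x ∈ Ideal.span ({a} : Set R) := by
      intro x hx
      rcases hchain (Ideal.span {x}) (Ideal.span {a}) with h | h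
      · exact h (Ideal.mem_span_singleton_self x)
      · have : a ∈ Ideal.span ({x} : Set R) := h (Ideal.mem_span_singleton_self a)
        obtain ⟨r, hr⟩ := Ideal.mem_span_singleton'.mp this
        by_cases hru : IsUnit r
        · refine Ideal.mem_span_singleton'.mpr ⟨↑hru.unit⁻¹, ?_⟩
          rw [← hr, ← mul_assoc, IsUnit.val_inv_mul, one_mul]
        · exfalso
          have habc : r * x * b ∈ I := by rw [hr]; exact hab
          rcases h1 r x b hru hx hb habc with h' | h'
          · exact haI (hr ▸ h')
          · exact hbδ h'
    -- M ^ 2 ≤ I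
    have hM2I : M ^ 2 ≤ I := by
      rw [pow_two, Ideal.mul_le]
      intro x hx y hy
      obtain ⟨r, hr⟩ := Ideal.mem_span_singleton'.mp (hMa x (hMnon x hx))
      have : r * (a * y) ∈ I := I.mul_mem_left r (haMI y (hMnon y hy))
      rwa [← mul_assoc, hr] at this
    -- I ≤ M
    have hIM : I ≤ M := by
      rcases hchain I M with h | h
      · exact h
      · exact (hM.eq_of_le hItop h) ▸ le_refl I
    -- I ≤ M ^ 2
    have hIM2 : I ≤ M ^ 2 := by
      intro t ht
      obtain ⟨s, hs⟩ := Ideal.mem_span_singleton'.mp (hMa t (hMnon t (hIM ht)))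
      by_cases hsu : IsUnit s
      · exfalso
        apply haI
        have := I.mul_mem_left (↑hsu.unit⁻¹) ht
        rwa [← hs, ← mul_assoc, IsUnit.val_inv_mul, one_mul] at this
      · obtain ⟨u, hu⟩ := Ideal.mem_span_singleton'.mp (hMa s hsu)
        have : u * (a * a) ∈ M ^ 2 := by
          rw [pow_two]
          exact Ideal.mul_mem_left _ u (Ideal.mul_mem_mul haM haM)
        rwa [← mul_assoc, hu, hs] at this
    exact hne (le_antisymm hIM2 hM2I)
  · rintro ⟨hItop, h⟩
    exact ⟨hItop, fun a b c _ _ _ habc => h (a * b) c habc⟩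
end

section
/- Let R be an arithmetical ring with Jacobson radical M and let I be a proper ideal of R with I ≠ M². Then I is a 1-absorbing δ-primary ideal of R if and only if I is a δ-primary ideal of R. -/
open Ideal

theorem arithmetical_one_abs_delta_primary_iff_delta_primary
    {R : Type*} [CommRing R] [Nontrivial R]
    (harith : ∀ (P : Ideal R) (hP : P.IsMaximal),
      ∀ I J : Ideal (@Localization.AtPrime R _ P hP.isPrime), I ≤ J ∨ J ≤ I)
    (δ : Ideal R → Ideal R) (hδ : ExpansionFunction R δ)
    (I : Ideal R) (hIproper : I ≠ ⊤)
    (hne : I ≠ ((⊥ : Ideal R).jacobson) ^ 2) :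
    IsOneAbsDeltaPrimary δ I ↔ IsDeltaPrimary δ I := by
  constructor
  · rintro ⟨hne', H⟩
    refine ⟨hIproper, ?_⟩
    intro a b hab
    by_contra hcon
    push_neg at hcon
    obtain ⟨ha, hb⟩ := hcon
    have hbI : b ∉ I := fun h => hb (hδ.1 I h)
    have hau : ¬ IsUnit a := by
      intro h
      apply hbI
      have h1 : (↑h.unit⁻¹ : R) * (a * b) ∈ I := I.mul_mem_left _ hab
      rwa [← mul_assoc, h.val_inv_mul, one_mul] at h1
    have hbu : ¬ IsUnit b := by
      intro h
      apply ha
      have h1 : (a * b) * (↑h.unit⁻¹ : R) ∈ I := I.mul_mem_right _ hab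
      rwa [mul_assoc, h.mul_val_inv, mul_one] at h1
    have key : ∀ c : R, ¬ IsUnit c → a * c ∈ I := by
      intro c hc
      refine (H a c b hau hc hbu ?_).resolve_right hb
      rw [mul_right_comm]
      exact I.mul_mem_right c hab
    by_cases hq : ∀ u v : R, ¬ IsUnit u → ¬ IsUnit v → ¬ IsUnit (u + v)
    · -- local case
      haveI : IsLocalRing R := IsLocalRing.of_nonunits_add (by
        intro u v hu hv
        exact hq u v hu hv)
      have hMmax : (IsLocalRing.maximalIdeal R).IsMaximal :=
        IsLocalRing.maximalIdeal.isMaximal R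
      have hunit : ∀ s : (IsLocalRing.maximalIdeal R).primeCompl, IsUnit (s : R) := by
        intro s
        by_contra h
        exact s.2 ((IsLocalRing.mem_maximalIdeal _).mpr (mem_nonunits_iff.mpr h))
      have hle : ∀ J K : Ideal R,
          Ideal.map (algebraMap R (Localization.AtPrime (IsLocalRing.maximalIdeal R))) J ≤
            Ideal.map (algebraMap R (Localization.AtPrime (IsLocalRing.maximalIdeal R))) K →
          J ≤ K := by
        intro J K h r hr
        have h1 := h (Ideal.mem_map_of_mem
          (algebraMap R (Localization.AtPrime (IsLocalRing.maximalIdeal R))) hr)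
        rw [IsLocalization.mem_map_algebraMap_iff
          (IsLocalRing.maximalIdeal R).primeCompl] at h1
        obtain ⟨⟨x, s⟩, hx⟩ := h1
        have h2 : algebraMap R (Localization.AtPrime (IsLocalRing.maximalIdeal R)) (r * (s : R))
            = algebraMap R (Localization.AtPrime (IsLocalRing.maximalIdeal R)) (x : R) := by
          rw [_root_.map_mul]; exact hx
        rw [IsLocalization.eq_iff_exists (IsLocalRing.maximalIdeal R).primeCompl] at h2
        obtain ⟨c, hc⟩ := h2
        have hmem : ((c : R) * (s : R)) * r ∈ K := by
          have h3 : (c : R) * (r * (s : R)) ∈ K := hc ▸ K.mul_mem_left _ x.2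
          rwa [show ((c : R) * (s : R)) * r = (c : R) * (r * (s : R)) from by ring]
        exact (K.unit_mul_mem_iff_mem ((hunit c).mul (hunit s))).mp hmem
      have hchain : ∀ J K : Ideal R, J ≤ K ∨ K ≤ J := by
        intro J K
        rcases harith (IsLocalRing.maximalIdeal R) hMmax
          (Ideal.map (algebraMap R (Localization.AtPrime (IsLocalRing.maximalIdeal R))) J)
          (Ideal.map (algebraMap R (Localization.AtPrime (IsLocalRing.maximalIdeal R))) K)
          with h | h
        · exact Or.inl (hle _ _ h)
        · exact Or.inr (hle _ _ h)
      have hxy : ∀ x ∈ IsLocalRing.maximalIdeal R, ∀ y ∈ IsLocalRing.maximalIdeal R,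
          x * y ∈ I := by
        intro x hx y hy
        have hxa : ∃ r : R, r * a = x := by
          rcases hchain (span {x}) (span {a}) with h | h
          · exact mem_span_singleton'.mp (h (mem_span_singleton_self x))
          · obtain ⟨r, hr⟩ := mem_span_singleton'.mp (h (mem_span_singleton_self a))
            by_cases hru : IsUnit r
            · exact ⟨(↑hru.unit⁻¹ : R), by rw [← hr, ← mul_assoc, hru.val_inv_mul, one_mul]⟩
            · exfalso
              have hxu : ¬ IsUnit x :=
                mem_nonunits_iff.mp ((IsLocalRing.mem_maximalIdeal x).mp hx)
              rcases H r x b hru hxu hbu (by rw [hr]; exact hab) with h3 | h3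
              · exact ha (hr ▸ h3)
              · exact hb h3
        obtain ⟨r, hr⟩ := hxa
        have hay : a * y ∈ I :=
          key y (mem_nonunits_iff.mp ((IsLocalRing.mem_maximalIdeal y).mp hy))
        have h4 : x * y = r * (a * y) := by rw [← hr]; ring
        rw [h4]
        exact I.mul_mem_left r hay
      have hM2I : (IsLocalRing.maximalIdeal R) ^ 2 ≤ I := by
        rw [pow_two, Ideal.mul_le]
        exact hxy
      have hIM2 : I ≤ (IsLocalRing.maximalIdeal R) ^ 2 := by
        intro t ht
        have hIb : I ≤ span {b} := by
          rcases hchain I (span {b}) with h | h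
          · exact h
          · exact absurd (h (mem_span_singleton_self b)) hbI
        obtain ⟨u, hu⟩ := mem_span_singleton'.mp (hIb ht)
        have huu : ¬ IsUnit u := by
          intro h
          apply hbI
          have h1 : (↑h.unit⁻¹ : R) * t ∈ I := I.mul_mem_left _ ht
          rwa [← hu, ← mul_assoc, h.val_inv_mul, one_mul] at h1
        rw [← hu, pow_two]
        exact Ideal.mul_mem_mul ((IsLocalRing.mem_maximalIdeal u).mpr (mem_nonunits_iff.mpr huu))
          ((IsLocalRing.mem_maximalIdeal b).mpr (mem_nonunits_iff.mpr hbu))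
      have hjac : ((⊥ : Ideal R).jacobson) = IsLocalRing.maximalIdeal R :=
        IsLocalRing.jacobson_eq_maximalIdeal ⊥ bot_ne_top
      exact hne (by rw [hjac]; exact le_antisymm hIM2 hM2I)
    · -- non-local case: a ∈ I, contradiction
      push_neg at hq
      obtain ⟨u, v, hu, hv, hw⟩ := hq
      apply ha
      have hu' : ¬ IsUnit (u * (↑hw.unit⁻¹ : R)) := by
        intro h
        apply hu
        have h5 : u = (u * (↑hw.unit⁻¹ : R)) * (u + v) := by
          rw [mul_assoc, hw.val_inv_mul, mul_one]
        rw [h5]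
        exact h.mul hw
      have hv' : ¬ IsUnit (v * (↑hw.unit⁻¹ : R)) := by
        intro h
        apply hv
        have h5 : v = (v * (↑hw.unit⁻¹ : R)) * (u + v) := by
          rw [mul_assoc, hw.val_inv_mul, mul_one]
        rw [h5]
        exact h.mul hw
      have h1 : a * (u * (↑hw.unit⁻¹ : R)) ∈ I := key _ hu'
      have h2 : a * (v * (↑hw.unit⁻¹ : R)) ∈ I := key _ hv'
      have h3 : a * (u * (↑hw.unit⁻¹ : R)) + a * (v * (↑hw.unit⁻¹ : R)) = a := by
        rw [← mul_add, ← add_mul, hw.mul_val_inv, mul_one]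
      rw [← h3]
      exact I.add_mem h1 h2
  · rintro ⟨_, H⟩
    exact ⟨hIproper, fun a b c _ _ _ habc => H (a * b) c habc⟩
end

section
/- Let R be a local ring whose maximal ideal M is principal, and let I be a proper ideal of R. Then I is a 1-absorbing δ-primary ideal of R if and only if either I is a δ-primary ideal of R or M² ⊆ I. -/
open Ideal

theorem local_principal_max_one_abs_delta_primary_iff
    {R : Type*} [CommRing R] [IsLocalRing R]
    (hprin : (IsLocalRing.maximalIdeal R).IsPrincipal)
    (δ : Ideal R → Ideal R) (hδ : ExpansionFunction R δ)
    (I : Ideal R) (hIproper : I ≠ ⊤) :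
    IsOneAbsDeltaPrimary δ I ↔
      (IsDeltaPrimary δ I ∨ (IsLocalRing.maximalIdeal R) ^ 2 ≤ I) := by
  obtain ⟨p, hp⟩ := hprin
  rw [Ideal.submodule_span_eq] at hp
  have hpM : p ∈ IsLocalRing.maximalIdeal R := by
    rw [hp]; exact Ideal.mem_span_singleton_self p
  have hpnu : ¬ IsUnit p := IsLocalRing.mem_maximalIdeal p |>.mp hpM
  constructor
  · rintro ⟨-, h1⟩
    by_cases hprim : IsDeltaPrimary δ I
    · exact Or.inl hprim
    · right
      -- extract a counterexample to δ-primary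
      simp only [IsDeltaPrimary, not_and, not_forall] at hprim
      obtain ⟨a, b, hab, hcon⟩ := hprim hIproper
      push_neg at hcon
      obtain ⟨haI, hbδ⟩ := hcon
      have hanu : ¬ IsUnit a := by
        intro ha
        exact hbδ (hδ.1 I (by
          have : b = ha.unit⁻¹ * (a * b) := by
            rw [← mul_assoc, IsUnit.val_inv_mul, one_mul]
          rw [this]; exact I.mul_mem_left _ hab))
      have hbnu : ¬ IsUnit b := by
        intro hb
        exact haI (by
          have : a = (a * b) * hb.unit⁻¹ := by rw [mul_assoc, IsUnit.mul_val_inv, mul_one]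
          rw [this]; exact I.mul_mem_right _ hab)
      -- a ∈ M, write a = p * r
      have haM : a ∈ IsLocalRing.maximalIdeal R := hanu
      rw [hp, Ideal.mem_span_singleton] at haM
      obtain ⟨r, hr⟩ := haM
      have hru : IsUnit r := by
        by_contra hrnu
        have : p * r * b ∈ I := by rw [← hr]; exact hab
        rcases h1 p r b hpnu hrnu hbnu this with h | h
        · exact haI (hr ▸ h)
        · exact hbδ h
      -- p * b ∈ I
      have hpb : p * b ∈ I := by
        have : p * b = hru.unit⁻¹ * (a * b) := by
          rw [hr]; rw [show p * r * b = r * (p * b) by ring, ← mul_assoc, IsUnit.val_inv_mul, one_mul]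
        rw [this]; exact I.mul_mem_left _ hab
      have hp2 : p * p ∈ I := by
        rcases h1 p p b hpnu hpnu hbnu (by rw [mul_assoc]; exact Ideal.mul_mem_left _ _ hpb)
          with h | h
        · exact h
        · exact absurd h hbδ
      rw [hp, sq, Ideal.span_singleton_mul_span_singleton, Ideal.span_singleton_le_iff_mem]
      exact hp2
  · rintro (⟨-, hprim⟩ | hM2)
    · refine ⟨hIproper, fun a b c _ _ _ habc => ?_⟩
      rcases hprim (a * b) c habc with h | h
      · exact Or.inl h
      · exact Or.inr h
    · refine ⟨hIproper, fun a b c ha hb _ _ => Or.inl ?_⟩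
      exact hM2 (by rw [sq]; exact Ideal.mul_mem_mul ha hb)
end

section
/- Let R be a local ring whose maximal ideal M is principal, let I be a proper ideal of R, and assume √I ⊆ δ(I). Then I is a 1-absorbing δ-primary ideal of R if and only if I is a δ-primary ideal of R. -/
open Ideal

theorem local_principal_max_radical_le_one_abs_iff_delta_primary
    {R : Type*} [CommRing R] [IsLocalRing R]
    (hprin : (IsLocalRing.maximalIdeal R).IsPrincipal)
    (δ : Ideal R → Ideal R) (hδ : ExpansionFunction R δ)
    (I : Ideal R) (hIproper : I ≠ ⊤) (hrad : I.radical ≤ δ I) :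
    IsOneAbsDeltaPrimary δ I ↔ IsDeltaPrimary δ I := by
  constructor
  · rintro ⟨-, h1⟩
    refine ⟨hIproper, ?_⟩
    intro a b hab
    by_cases ha : IsUnit a
    · right
      have hb : b ∈ I := by
        have := I.mul_mem_left (↑ha.unit⁻¹) hab
        rwa [← mul_assoc, IsUnit.val_inv_mul, one_mul] at this
      exact hδ.1 I hb
    by_cases hb : IsUnit b
    · left
      have := I.mul_mem_right (↑hb.unit⁻¹) hab
      rwa [mul_assoc, IsUnit.mul_val_inv, mul_one] at this
    by_cases haI : a ∈ I
    · exact Or.inl haI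
    right
    obtain ⟨p, hp⟩ := hprin
    have hpnu : ¬ IsUnit p := by
      intro hu
      exact (IsLocalRing.maximalIdeal.isMaximal R).ne_top
        (by rw [hp]; exact Ideal.span_singleton_eq_top.mpr hu)
    have haM : a ∈ IsLocalRing.maximalIdeal R := ha
    rw [hp, Ideal.submodule_span_eq, Ideal.mem_span_singleton] at haM
    obtain ⟨a₁, ha₁⟩ := haM
    by_cases ha₁u : IsUnit a₁
    · -- (a) = M, so a ∣ b
      have hbM : b ∈ IsLocalRing.maximalIdeal R := hb
      rw [hp, Ideal.submodule_span_eq, Ideal.mem_span_singleton] at hbM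
      obtain ⟨b₁, hb₁⟩ := hbM
      obtain ⟨u, hu⟩ := ha₁u
      have hab' : b = a * ((↑u⁻¹ : R) * b₁) := by
        rw [hb₁, ha₁, ← hu, mul_assoc, ← mul_assoc (↑u : R), Units.mul_inv, one_mul]
      set t : R := (↑u⁻¹ : R) * b₁ with ht
      have haat : a * a * t ∈ I := by
        have h' : a * b ∈ I := hab
        rwa [hab', ← mul_assoc] at h'
      have hbb : a * a ∈ I → b ∈ δ I := by
        intro haa
        have hb2 : b * b ∈ I := by
          rw [hab']
          have heq : a * t * (a * t) = (a * a) * (t * t) := by ring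
          rw [heq]
          exact I.mul_mem_right _ haa
        exact hrad (Ideal.mem_radical_iff.mpr ⟨2, by rwa [pow_two]⟩)
      by_cases htu : IsUnit t
      · apply hbb
        have := I.mul_mem_right (↑htu.unit⁻¹) haat
        rwa [mul_assoc, IsUnit.mul_val_inv, mul_one] at this
      · rcases h1 a a t ha ha htu haat with h | h
        · exact hbb h
        · rw [hab']; exact (δ I).mul_mem_left a h
    · have habc : p * a₁ * b ∈ I := by rwa [← ha₁]
      rcases h1 p a₁ b hpnu ha₁u hb habc with h | h
      · exact absurd (by rwa [ha₁]) haI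
      · exact h
  · rintro ⟨hI, h⟩
    exact ⟨hI, fun a b c _ _ _ habc => h (a * b) c habc⟩
end

section
/- Let {J_i : i ∈ D} be a nonempty family of 1-absorbing δ-primary ideals of R that is directed with respect to inclusion (for all i, j ∈ D there is k ∈ D with J_i ⊆ J_k and J_j ⊆ J_k). Then the union J = ⋃_{i ∈ D} J_i is a 1-absorbing δ-primary ideal of R. -/
open Ideal

theorem directed_union_one_abs_delta_primary
    {R : Type*} [CommRing R] [Nontrivial R]
    (δ : Ideal R → Ideal R) (hδ : ExpansionFunction R δ)
    {D : Type*} [Nonempty D] (J : D → Ideal R)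
    (hdir : ∀ i j : D, ∃ k : D, J i ≤ J k ∧ J j ≤ J k)
    (h : ∀ i : D, IsOneAbsDeltaPrimary δ (J i)) :
    (↑(⨆ i, J i) : Set R) = ⋃ i, (J i : Set R) ∧
      IsOneAbsDeltaPrimary δ (⨆ i, J i) := by
  have hDir : Directed (· ≤ ·) J := fun i j => hdir i j
  have hmem : ∀ x : R, x ∈ (⨆ i, J i) ↔ ∃ i, x ∈ J i := fun x =>
    Submodule.mem_iSup_of_directed J hDir
  refine ⟨Submodule.coe_iSup_of_directed J hDir, ?_, ?_⟩
  · intro htop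
    obtain ⟨i, hi⟩ := (hmem 1).mp (htop ▸ Submodule.mem_top)
    exact (h i).1 (Ideal.eq_top_iff_one _ |>.mpr hi)
  · intro a b c ha hb hc habc
    obtain ⟨i, hi⟩ := (hmem _).mp habc
    rcases (h i).2 a b c ha hb hc hi with hab | hcδ
    · exact Or.inl ((hmem _).mpr ⟨i, hab⟩)
    · exact Or.inr (hδ.2 _ _ (le_iSup J i) hcδ)
end

section
/- Let I be a 1-absorbing δ-primary ideal of R such that √(δ(I)) = δ(√I). Then √I is a δ-primary ideal of R. -/
open Ideal

theorem radical_of_one_abs_delta_primary_is_delta_primary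
    {R : Type*} [CommRing R] [Nontrivial R]
    (δ : Ideal R → Ideal R) (hδ : ExpansionFunction R δ)
    (I : Ideal R) (hI : IsOneAbsDeltaPrimary δ I)
    (hrad : (δ I).radical = δ I.radical) :
    IsDeltaPrimary δ I.radical := by
  refine ⟨by simpa [Ideal.radical_eq_top] using hI.1, fun a b hab => ?_⟩
  by_cases hb : IsUnit b
  · left
    obtain ⟨u, rfl⟩ := hb
    have : a * ↑u * ↑u⁻¹ ∈ I.radical := Ideal.mul_mem_right _ _ hab
    simpa [mul_assoc] using this
  by_cases ha : IsUnit a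
  · right
    have : a * b ∈ δ I.radical := (hδ.1 _) hab
    obtain ⟨u, rfl⟩ := ha
    have := Ideal.mul_mem_left (δ I.radical) ↑u⁻¹ this
    simpa [← mul_assoc] using this
  · obtain ⟨n, hn⟩ := hab
    rcases Nat.eq_zero_or_pos n with rfl | hnpos
    · exact absurd (Ideal.eq_top_iff_one I |>.2 (by simpa using hn)) hI.1
    have han : ¬ IsUnit (a ^ n) := fun h => ha ((isUnit_pow_iff hnpos.ne').mp h)
    have hbn : ¬ IsUnit (b ^ n) := fun h => hb ((isUnit_pow_iff hnpos.ne').mp h)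
    have hmem : a ^ n * a * b ^ n ∈ I := by
      have : (a * b) ^ n * a ∈ I := Ideal.mul_mem_right _ _ hn
      rw [mul_pow] at this
      convert this using 1
      ring
    rcases hI.2 (a ^ n) a (b ^ n) han ha hbn hmem with h | h
    · exact Or.inl ⟨n + 1, by rw [pow_succ]; exact h⟩
    · right
      rw [← hrad]
      exact ⟨n, h⟩
end

section
/- A proper ideal I of R is a 1-absorbing δ-primary ideal if and only if, whenever I₁I₂I₃ ⊆ I for some proper ideals I₁, I₂, I₃ of R, then I₁I₂ ⊆ I or I₃ ⊆ δ(I). -/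
open Ideal

theorem one_abs_delta_primary_iff_ideal_version
    {R : Type*} [CommRing R] [Nontrivial R]
    (δ : Ideal R → Ideal R) (hδ : ExpansionFunction R δ)
    (I : Ideal R) (hIproper : I ≠ ⊤) :
    IsOneAbsDeltaPrimary δ I ↔
      ∀ I₁ I₂ I₃ : Ideal R, I₁ ≠ ⊤ → I₂ ≠ ⊤ → I₃ ≠ ⊤ →
        I₁ * I₂ * I₃ ≤ I → I₁ * I₂ ≤ I ∨ I₃ ≤ δ I := by
  constructor
  · rintro ⟨hI, h⟩ I₁ I₂ I₃ h1 h2 h3 hle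
    by_cases h3' : I₃ ≤ δ I
    · exact Or.inr h3'
    · left
      obtain ⟨c, hc, hcδ⟩ := Set.not_subset.mp h3'
      have hcu : ¬ IsUnit c := fun hu => h3 (I₃.eq_top_of_isUnit_mem hc hu)
      rw [Ideal.mul_le]
      intro a ha b hb
      have hau : ¬ IsUnit a := fun hu => h1 (I₁.eq_top_of_isUnit_mem ha hu)
      have hbu : ¬ IsUnit b := fun hu => h2 (I₂.eq_top_of_isUnit_mem hb hu)
      have habc : a * b * c ∈ I :=
        hle (Ideal.mul_mem_mul (Ideal.mul_mem_mul ha hb) hc)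
      exact (h a b c hau hbu hcu habc).resolve_right hcδ
  · intro h
    refine ⟨hIproper, fun a b c ha hb hc habc => ?_⟩
    have ha' : Ideal.span {a} ≠ ⊤ := by
      simpa [Ideal.span_singleton_eq_top] using ha
    have hb' : Ideal.span {b} ≠ ⊤ := by
      simpa [Ideal.span_singleton_eq_top] using hb
    have hc' : Ideal.span {c} ≠ ⊤ := by
      simpa [Ideal.span_singleton_eq_top] using hc
    have hprod : Ideal.span {a} * Ideal.span {b} * Ideal.span {c} ≤ I := by
      rw [Ideal.span_singleton_mul_span_singleton, Ideal.span_singleton_mul_span_singleton,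
        Ideal.span_singleton_le_iff_mem]
      exact habc
    rcases h _ _ _ ha' hb' hc' hprod with h' | h'
    · left
      rw [Ideal.span_singleton_mul_span_singleton, Ideal.span_singleton_le_iff_mem] at h'
      exact h'
    · right
      exact h' (Ideal.mem_span_singleton_self c)
end

section
/- Let δ be an intersection preserving expansion function of the ideals of R, i.e., δ(I₁ ∩ I₂ ∩ ... ∩ Iₙ) = δ(I₁) ∩ δ(I₂) ∩ ... ∩ δ(Iₙ) for any finitely many ideals I₁, ..., Iₙ of R. If I₁, I₂, ..., Iₙ are 1-absorbing δ-primary ideals of R and there is an ideal P with δ(I_i) = P for all i ∈ {1, 2, ..., n}, then I₁ ∩ I₂ ∩ ... ∩ Iₙ is a 1-absorbing δ-primary ideal of R. -/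
open Ideal

theorem inter_of_one_abs_delta_primary_same_delta
    {R : Type*} [CommRing R] [Nontrivial R]
    (δ : Ideal R → Ideal R) (hδ : ExpansionFunction R δ)
    (hpres : ∀ (m : ℕ) (g : Fin (m + 1) → Ideal R),
      δ (⨅ i, g i) = ⨅ i, δ (g i))
    (n : ℕ) (f : Fin (n + 1) → Ideal R)
    (h : ∀ i, IsOneAbsDeltaPrimary δ (f i))
    (P : Ideal R) (hP : ∀ i, δ (f i) = P) :
    IsOneAbsDeltaPrimary δ (⨅ i, f i) := by
  have hδI : δ (⨅ i, f i) = P := by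
    rw [hpres n f]
    simp only [hP]
    exact iInf_const
  constructor
  · intro htop
    exact (h 0).1 (top_le_iff.mp (htop ▸ iInf_le f 0))
  · intro a b c ha hb hc habc
    by_cases hab : a * b ∈ ⨅ i, f i
    · exact Or.inl hab
    · right
      rw [Ideal.mem_iInf] at hab
      push_neg at hab
      obtain ⟨i, hi⟩ := hab
      rcases (h i).2 a b c ha hb hc (Ideal.mem_iInf.mp habc i) with h1 | h2
      · exact absurd h1 hi
      · rw [hδI, ← hP i]; exact h2
end

section
/- Every proper principal ideal of R is a 1-absorbing δ-primary ideal of R if and only if every proper ideal of R is a 1-absorbing δ-primary ideal of R. -/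
open Ideal

theorem principal_one_abs_delta_primary_iff_all
    {R : Type*} [CommRing R] [Nontrivial R]
    (δ : Ideal R → Ideal R) (hδ : ExpansionFunction R δ) :
    (∀ I : Ideal R, I.IsPrincipal → I ≠ ⊤ → IsOneAbsDeltaPrimary δ I) ↔
      (∀ I : Ideal R, I ≠ ⊤ → IsOneAbsDeltaPrimary δ I) := by
  constructor
  · intro h I hI
    refine ⟨hI, fun a b c ha hb hc habc => ?_⟩
    have hnc : ¬ IsUnit (a * b * c) := fun hu => ha (isUnit_of_mul_isUnit_left (isUnit_of_mul_isUnit_left hu))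
    have hJ : Ideal.span {a * b * c} ≠ ⊤ := by
      simpa [Ideal.span_singleton_eq_top] using hnc
    obtain ⟨_, h2⟩ := h _ ⟨⟨_, rfl⟩⟩ hJ
    have hle : Ideal.span {a * b * c} ≤ I := (Ideal.span_singleton_le_iff_mem _).mpr habc
    rcases h2 a b c ha hb hc (Ideal.mem_span_singleton_self _) with h1 | h1
    · exact Or.inl (hle h1)
    · exact Or.inr (hδ.2 _ _ hle h1)
  · intro h I _ hI
    exact h I hI
end

section
/- Let δ be an expansion function of the ideals of R satisfying condition (*) (δ(I) ≠ R for every proper ideal I of R), δ(Jac(R)) = Jac(R), and δ(xI) = xδ(I) for every proper ideal I of R and every x ∈ R. Then the following are equivalent: (i) every proper principal ideal of R is a 1-absorbing δ-primary ideal; (ii) every proper ideal of R is a 1-absorbing δ-primary ideal; (iii) R is a local ring and Jac(R)² = (0), where Jac(R) denotes the Jacobson radical of R. -/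
open Ideal

theorem cancel_unit {R : Type*} [CommRing R] {z c : R} (hc : IsUnit c) (h : z * c = 0) :
    z = 0 := by
  obtain ⟨u, rfl⟩ := hc
  calc z = z * u * ↑u⁻¹ := by rw [mul_assoc, Units.mul_inv, mul_one]
  _ = 0 := by rw [h, zero_mul]

theorem aux_main {R : Type*} [CommRing R] [Nontrivial R]
    (δ : Ideal R → Ideal R) (hδ : ExpansionFunction R δ)
    (hjac : δ ((⊥ : Ideal R).jacobson) = (⊥ : Ideal R).jacobson)
    (hsmul : ∀ (x : R) (I : Ideal R), I ≠ ⊤ → δ (span {x} * I) = span {x} * δ I)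
    (h : ∀ I : Ideal R, I.IsPrincipal → I ≠ ⊤ → IsOneAbsDeltaPrimary δ I) :
    IsLocalRing R ∧ ((⊥ : Ideal R).jacobson) ^ 2 = ⊥ := by
  have key : ∀ a b : R, ¬IsUnit a → ¬IsUnit b → a + b = 1 → False := by
    intro a b ha hb hab
    have hprop : ¬ IsUnit (a * a * b) := fun hu => hb (isUnit_of_mul_isUnit_right hu)
    have hI : (span {a * a * b} : Ideal R) ≠ ⊤ := fun ht =>
      hprop (Ideal.span_singleton_eq_top.mp ht)
    obtain ⟨-, h2⟩ := h (span {a * a * b}) ⟨⟨a * a * b, rfl⟩⟩ hI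
    rcases h2 a a b ha ha hb (Ideal.mem_span_singleton_self _) with h3 | h3
    · obtain ⟨t, ht⟩ := Ideal.mem_span_singleton.mp h3
      exact hb (IsUnit.of_mul_eq_one (a * a * t + a + a + b)
        (by linear_combination (a + b + 1) * hab - ht))
    · have hb' : (span {b} : Ideal R) ≠ ⊤ := fun ht =>
        hb (Ideal.span_singleton_eq_top.mp ht)
      have heq : δ (span {a * a * b} : Ideal R) = span {a * a} * δ (span {b}) := by
        rw [← Ideal.span_singleton_mul_span_singleton, hsmul _ _ hb']
      rw [heq] at h3
      have h4 : b ∈ (span {a * a} : Ideal R) := Ideal.mul_le_left h3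
      obtain ⟨t, ht⟩ := Ideal.mem_span_singleton.mp h4
      exact ha (IsUnit.of_mul_eq_one (1 + a * t) (by linear_combination hab - ht))
  have hloc : IsLocalRing R := by
    apply IsLocalRing.of_nonunits_add
    intro a b ha hb hab
    obtain ⟨u, hu⟩ := hab
    have h1 : ¬ IsUnit ((↑u⁻¹ : R) * a) := fun hua => ha <| by
      have : a = ↑u * (↑u⁻¹ * a) := by rw [← mul_assoc, Units.mul_inv, one_mul]
      rw [this]; exact (Units.isUnit u).mul hua
    have h2 : ¬ IsUnit ((↑u⁻¹ : R) * b) := fun hub => hb <| by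
      have : b = ↑u * (↑u⁻¹ * b) := by rw [← mul_assoc, Units.mul_inv, one_mul]
      rw [this]; exact (Units.isUnit u).mul hub
    exact key _ _ h1 h2 (by rw [← mul_add, ← hu, Units.inv_mul])
  refine ⟨hloc, ?_⟩
  rw [pow_two, eq_bot_iff, Ideal.mul_le]
  intro x hx y hy
  have hJ : ((⊥ : Ideal R).jacobson) ≠ ⊤ := fun ht =>
    bot_ne_top (Ideal.jacobson_eq_top_iff.mp ht)
  have hxy : x * y ∈ (⊥ : Ideal R).jacobson := Ideal.mul_mem_right y _ hx
  have hxu : ¬ IsUnit x := fun hu => hJ (Ideal.eq_top_of_isUnit_mem _ hx hu)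
  have hyu : ¬ IsUnit y := fun hu => hJ (Ideal.eq_top_of_isUnit_mem _ hy hu)
  have hxyu : ¬ IsUnit (x * y) := fun hu => hxu (isUnit_of_mul_isUnit_left hu)
  have hIs : (span {x * y} : Ideal R) ≠ ⊤ := fun ht =>
    hxyu (Ideal.span_singleton_eq_top.mp ht)
  have hI : (span {x * y * (x * y)} : Ideal R) ≠ ⊤ := fun ht =>
    hxu (isUnit_of_mul_isUnit_left (isUnit_of_mul_isUnit_left
      (Ideal.span_singleton_eq_top.mp ht)))
  obtain ⟨-, h2⟩ := h (span {x * y * (x * y)}) ⟨⟨x * y * (x * y), rfl⟩⟩ hI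
  have hspanle : (span {x * y} : Ideal R) ≤ (⊥ : Ideal R).jacobson := by
    rw [Ideal.span_le, Set.singleton_subset_iff]; exact hxy
  show x * y ∈ (⊥ : Ideal R)
  rw [Ideal.mem_bot]
  rcases h2 x y (x * y) hxu hyu hxyu (Ideal.mem_span_singleton_self _) with h3 | h3
  · obtain ⟨t, ht⟩ := Ideal.mem_span_singleton.mp h3
    have hu : IsUnit ((x * y) * (-t) + 1) := Ideal.mem_jacobson_bot.mp hxy _
    exact cancel_unit hu (by linear_combination ht)
  · have heq : δ (span {x * y * (x * y)} : Ideal R) = span {x * y} * δ (span {x * y}) := by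
      rw [← Ideal.span_singleton_mul_span_singleton, hsmul _ _ hIs]
    rw [heq] at h3
    obtain ⟨d, hd, hde⟩ := Ideal.mem_span_singleton_mul.mp h3
    have hdJ : d ∈ (⊥ : Ideal R).jacobson := by
      rw [← hjac]; exact hδ.2 _ _ hspanle hd
    have hu : IsUnit (d * (-1) + 1) := Ideal.mem_jacobson_bot.mp hdJ _
    exact cancel_unit hu (by linear_combination - hde)

theorem local_jacsq_imp_all {R : Type*} [CommRing R]
    (δ : Ideal R → Ideal R) (hloc : IsLocalRing R)
    (hJ : ((⊥ : Ideal R).jacobson) ^ 2 = ⊥) :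
    ∀ I : Ideal R, I ≠ ⊤ → IsOneAbsDeltaPrimary δ I := by
  intro I hI
  refine ⟨hI, fun a b c ha hb _ _ => Or.inl ?_⟩
  have hm : ((⊥ : Ideal R).jacobson) = IsLocalRing.maximalIdeal R :=
    IsLocalRing.jacobson_eq_maximalIdeal ⊥ bot_ne_top
  have hab : a * b ∈ ((⊥ : Ideal R).jacobson) ^ 2 := by
    rw [pow_two, hm]
    exact Ideal.mul_mem_mul (IsLocalRing.mem_maximalIdeal a |>.mpr ha)
      (IsLocalRing.mem_maximalIdeal b |>.mpr hb)
  rw [hJ] at hab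
  rw [Ideal.mem_bot] at hab
  rw [hab]
  exact I.zero_mem

theorem char_every_ideal_one_abs_delta_primary
    {R : Type*} [CommRing R] [Nontrivial R]
    (δ : Ideal R → Ideal R) (hδ : ExpansionFunction R δ)
    (hstar : ∀ I : Ideal R, I ≠ ⊤ → δ I ≠ ⊤)
    (hjac : δ ((⊥ : Ideal R).jacobson) = (⊥ : Ideal R).jacobson)
    (hsmul : ∀ (x : R) (I : Ideal R), I ≠ ⊤ → δ (span {x} * I) = span {x} * δ I) :
    ((∀ I : Ideal R, I.IsPrincipal → I ≠ ⊤ → IsOneAbsDeltaPrimary δ I) ↔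
      (∀ I : Ideal R, I ≠ ⊤ → IsOneAbsDeltaPrimary δ I)) ∧
    ((∀ I : Ideal R, I ≠ ⊤ → IsOneAbsDeltaPrimary δ I) ↔
      (IsLocalRing R ∧ ((⊥ : Ideal R).jacobson) ^ 2 = ⊥)) := by
  have main := fun hp => aux_main δ hδ hjac hsmul hp
  refine ⟨⟨fun hp I hI => ?_, fun hall I _ hI => hall I hI⟩,
    ⟨fun hall => main (fun I _ hI => hall I hI), fun ⟨hloc, hJ⟩ => local_jacsq_imp_all δ hloc hJ⟩⟩
  obtain ⟨hloc, hJ⟩ := main hp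
  exact local_jacsq_imp_all δ hloc hJ I hI
end

section
/- For a commutative ring R the following are equivalent: (i) every proper ideal of R is a 1-absorbing prime ideal; (ii) every proper principal ideal of R is a 1-absorbing prime ideal; (iii) R is a local ring and Jac(R)² = (0), where Jac(R) denotes the Jacobson radical of R. -/
open Ideal

/-- (iii) → (i): if `R` is local with `Jac(R)^2 = 0`, every proper ideal is 1-absorbing prime. -/
lemma aux_local_to_all {R : Type*} [CommRing R] [Nontrivial R]
    (hL : IsLocalRing R) (hJ : ((⊥ : Ideal R).jacobson) ^ 2 = ⊥) :
    ∀ I : Ideal R, I ≠ ⊤ → IsOneAbsPrime I := by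
  intro I hI
  refine ⟨hI, fun a b c ha hb _ _ => Or.inl ?_⟩
  have hm : (⊥ : Ideal R).jacobson = IsLocalRing.maximalIdeal R :=
    IsLocalRing.jacobson_eq_maximalIdeal ⊥ bot_ne_top
  have hab : a * b ∈ ((⊥ : Ideal R).jacobson) ^ 2 := by
    rw [pow_two]
    exact Ideal.mul_mem_mul (hm ▸ ha) (hm ▸ hb)
  rw [hJ] at hab
  simp only [Ideal.mem_bot] at hab
  rw [hab]
  exact I.zero_mem

/-- (ii) → (iii). -/
lemma aux_principal_to_local {R : Type*} [CommRing R] [Nontrivial R]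
    (h : ∀ I : Ideal R, I.IsPrincipal → I ≠ ⊤ → IsOneAbsPrime I) :
    IsLocalRing R ∧ ((⊥ : Ideal R).jacobson) ^ 2 = ⊥ := by
  have hL : IsLocalRing R := by
    apply IsLocalRing.of_unique_max_ideal
    obtain ⟨m, hm⟩ := Ideal.exists_maximal R
    refine ⟨m, hm, fun m' hm' => ?_⟩
    by_contra hne
    obtain ⟨a, ham', ham⟩ : ∃ a, a ∈ m' ∧ a ∉ m := Set.not_subset.mp fun hs =>
      hne (hm'.eq_of_le hm.ne_top hs)
    obtain ⟨b, hbm, hbm'⟩ : ∃ b, b ∈ m ∧ b ∉ m' := Set.not_subset.mp fun hs =>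
      hne ((hm.eq_of_le hm'.ne_top hs).symm)
    have hanu : ¬ IsUnit a := fun hu => hm'.ne_top (m'.eq_top_of_isUnit_mem ham' hu)
    have hbnu : ¬ IsUnit b := fun hu => hm.ne_top (m.eq_top_of_isUnit_mem hbm hu)
    set I : Ideal R := Ideal.span {a * a * b} with hIdef
    have hInt : I ≠ ⊤ := by
      rw [hIdef, Ne, Ideal.span_singleton_eq_top]
      intro hu
      exact hbnu (isUnit_of_mul_isUnit_right hu)
    obtain ⟨-, h1⟩ := h I ⟨⟨a * a * b, rfl⟩⟩ hInt
    have hmem : a * a * b ∈ I := Ideal.subset_span rfl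
    rcases h1 a a b hanu hanu hbnu hmem with hc | hc
    · -- a * a ∈ I ≤ m, so a ∈ m, contradiction
      have hIle : I ≤ m := by
        rw [hIdef, Ideal.span_singleton_le_iff_mem]
        exact Ideal.mul_mem_left m (a * a) hbm
      exact ham (hm.isPrime.mem_of_pow_mem 2 (by rw [pow_two]; exact hIle hc))
    · -- b ∈ I ≤ m', contradiction
      have hIle : I ≤ m' := by
        rw [hIdef, Ideal.span_singleton_le_iff_mem]
        exact Ideal.mul_mem_right b m' (Ideal.mul_mem_right a m' ham')
      exact hbm' (hIle hc)
  refine ⟨hL, ?_⟩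
  have hm : (⊥ : Ideal R).jacobson = IsLocalRing.maximalIdeal R :=
    IsLocalRing.jacobson_eq_maximalIdeal ⊥ bot_ne_top
  -- first: every nonunit squares to zero
  have hsq : ∀ a : R, ¬ IsUnit a → a * a = 0 := by
    intro a ha
    have hInt : Ideal.span {a * a * a} ≠ ⊤ := by
      rw [Ne, Ideal.span_singleton_eq_top]
      intro hu
      exact ha (isUnit_of_mul_isUnit_right hu)
    obtain ⟨-, h1⟩ := h (Ideal.span {a * a * a}) ⟨⟨a * a * a, rfl⟩⟩ hInt
    rcases h1 a a a ha ha ha (Ideal.subset_span rfl) with hc | hc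
    · obtain ⟨r, hr⟩ := Ideal.mem_span_singleton'.mp hc
      -- r * (a*a*a) = a*a, so (a*a) * (1 - r*a) = 0 and 1 - r*a is a unit
      have heq : (a * a) * (1 - r * a) = 0 := by ring_nf; linear_combination -hr
      have hu : IsUnit (1 - r * a) := by
        have : r * a ∈ IsLocalRing.maximalIdeal R := by
          exact Ideal.mul_mem_left _ r (IsLocalRing.mem_maximalIdeal a |>.mpr ha)
        exact IsLocalRing.isUnit_one_sub_self_of_mem_nonunits _ this
      exact (hu.mul_left_eq_zero).mp heq
    · obtain ⟨r, hr⟩ := Ideal.mem_span_singleton'.mp hc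
      -- r * (a*a*a) = a, so a * (1 - r*(a*a)) = 0
      have heq : a * (1 - r * (a * a)) = 0 := by linear_combination -hr
      have hu : IsUnit (1 - r * (a * a)) := by
        have : r * (a * a) ∈ IsLocalRing.maximalIdeal R :=
          Ideal.mul_mem_left _ r (Ideal.mul_mem_right a _
            (IsLocalRing.mem_maximalIdeal a |>.mpr ha))
        exact IsLocalRing.isUnit_one_sub_self_of_mem_nonunits _ this
      rw [(hu.mul_left_eq_zero).mp heq, mul_zero]
  -- then: the product of any two nonunits is zero
  have hprod : ∀ a b : R, ¬ IsUnit a → ¬ IsUnit b → a * b = 0 := by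
    intro a b ha hb
    obtain ⟨-, h1⟩ := h (⊥ : Ideal R) bot_isPrincipal bot_ne_top
    have habc : a * b * a ∈ (⊥ : Ideal R) := by
      rw [Ideal.mem_bot]
      calc a * b * a = (a * a) * b := by ring
        _ = 0 := by rw [hsq a ha, zero_mul]
    rcases h1 a b a ha hb ha habc with hc | hc
    · exact Ideal.mem_bot.mp hc
    · rw [Ideal.mem_bot.mp hc, zero_mul]
  rw [hm, pow_two]
  rw [eq_bot_iff]
  apply Ideal.mul_le.mpr
  intro x hx y hy
  rw [Ideal.mem_bot]
  exact hprod x y (IsLocalRing.mem_maximalIdeal x |>.mp hx)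
    (IsLocalRing.mem_maximalIdeal y |>.mp hy)

theorem char_every_ideal_one_abs_prime
    {R : Type*} [CommRing R] [Nontrivial R] :
    ((∀ I : Ideal R, I ≠ ⊤ → IsOneAbsPrime I) ↔
      (∀ I : Ideal R, I.IsPrincipal → I ≠ ⊤ → IsOneAbsPrime I)) ∧
    ((∀ I : Ideal R, I.IsPrincipal → I ≠ ⊤ → IsOneAbsPrime I) ↔
      (IsLocalRing R ∧ ((⊥ : Ideal R).jacobson) ^ 2 = ⊥)) := by
  constructor
  · constructor
    · intro h I _ hI
      exact h I hI
    · intro h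
      obtain ⟨hL, hJ⟩ := aux_principal_to_local h
      exact aux_local_to_all hL hJ
  · constructor
    · exact aux_principal_to_local
    · intro ⟨hL, hJ⟩ I _ hI
      exact aux_local_to_all hL hJ I hI
end

section
/- Let f : R → S be a ring homomorphism such that f(a) is a nonunit of S for every nonunit element a of R, and let δ and γ be expansion functions of the ideals of R and S respectively such that δ(f⁻¹(J)) = f⁻¹(γ(J)) for every ideal J of S (f is a δγ-homomorphism). If J is a 1-absorbing γ-primary ideal of S, then f⁻¹(J) is a 1-absorbing δ-primary ideal of R. -/
open Ideal

theorem comap_one_abs_gamma_primary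
    {R S : Type*} [CommRing R] [CommRing S] [Nontrivial R] [Nontrivial S]
    (f : R →+* S) (hf : ∀ a : R, ¬ IsUnit a → ¬ IsUnit (f a))
    (δ : Ideal R → Ideal R) (hδ : ExpansionFunction R δ)
    (γ : Ideal S → Ideal S) (hγ : ExpansionFunction S γ)
    (hcomm : ∀ J : Ideal S, δ (J.comap f) = (γ J).comap f)
    (J : Ideal S) (hJ : IsOneAbsDeltaPrimary γ J) :
    IsOneAbsDeltaPrimary δ (J.comap f) := by
  obtain ⟨hJne, hJprim⟩ := hJ
  constructor
  · intro h
    apply hJne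
    rw [Ideal.eq_top_iff_one] at h ⊢
    simpa using h
  · intro a b c ha hb hc habc
    have := hJprim (f a) (f b) (f c) (hf a ha) (hf b hb) (hf c hc) (by simpa using habc)
    rcases this with h | h
    · left; simpa using h
    · right; rw [hcomm]; exact h
end

section
/- Let R₁ and R₂ be commutative rings, R = R₁ × R₂, let δ₁ and δ₂ be expansion functions of the ideals of R₁ and R₂ respectively, and let δ_× be the expansion function of the ideals of R defined by δ_×(I₁ × I₂) = δ₁(I₁) × δ₂(I₂). For a proper ideal I of R the following are equivalent: (1) I is a 1-absorbing δ_×-primary ideal of R; (2) I is a δ_×-primary ideal of R; (3) either I = I₁ × R₂ where I₁ is a δ₁-primary ideal of R₁, or I = R₁ × I₂ where I₂ is a δ₂-primary ideal of R₂, or I = I₁ × I₂ where I₁ and I₂ are proper ideals of R₁ and R₂ respectively with δ₁(I₁) = R₁ and δ₂(I₂) = R₂. -/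
open Ideal

/-- `δ` is an expansion function of the ideals of `R`. -/
lemma isUnit_prod_iff' {R₁ R₂ : Type*} [CommRing R₁] [CommRing R₂] (a : R₁ × R₂) :
    IsUnit a ↔ IsUnit a.1 ∧ IsUnit a.2 := by
  constructor
  · rintro ⟨u, rfl⟩
    exact ⟨⟨Units.map (RingHom.fst R₁ R₂).toMonoidHom u, rfl⟩,
           ⟨Units.map (RingHom.snd R₁ R₂).toMonoidHom u, rfl⟩⟩
  · rintro ⟨h1, h2⟩
    obtain ⟨b, hb⟩ := isUnit_iff_exists_inv.mp h1
    obtain ⟨c, hc⟩ := isUnit_iff_exists_inv.mp h2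
    exact isUnit_iff_exists_inv.mpr ⟨(b, c), Prod.ext hb hc⟩

lemma mem_prod'' {R₁ R₂ : Type*} [CommRing R₁] [CommRing R₂]
    {I₁ : Ideal R₁} {I₂ : Ideal R₂} {x : R₁ × R₂} :
    x ∈ I₁.prod I₂ ↔ x.1 ∈ I₁ ∧ x.2 ∈ I₂ := by
  obtain ⟨a, b⟩ := x; exact Ideal.mem_prod I₁ I₂

lemma prod_ne_top_left {R₁ R₂ : Type*} [CommRing R₁] [CommRing R₂]
    {I₁ : Ideal R₁} {I₂ : Ideal R₂} (h : I₁ ≠ ⊤) : I₁.prod I₂ ≠ ⊤ := by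
  intro hT
  exact h (Ideal.eq_top_iff_one _ |>.mpr (by
    have := (Ideal.mem_prod I₁ I₂ (x := ((1 : R₁), (1 : R₂)))).mp (hT ▸ Submodule.mem_top)
    exact this.1))

lemma prod_ne_top_right {R₁ R₂ : Type*} [CommRing R₁] [CommRing R₂]
    {I₁ : Ideal R₁} {I₂ : Ideal R₂} (h : I₂ ≠ ⊤) : I₁.prod I₂ ≠ ⊤ := by
  intro hT
  exact h (Ideal.eq_top_iff_one _ |>.mpr (by
    have := (Ideal.mem_prod I₁ I₂ (x := ((1 : R₁), (1 : R₂)))).mp (hT ▸ Submodule.mem_top)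
    exact this.2))

theorem prod_one_abs_delta_primary_characterization
    {R₁ R₂ : Type*} [CommRing R₁] [CommRing R₂] [Nontrivial R₁] [Nontrivial R₂]
    (δ₁ : Ideal R₁ → Ideal R₁) (hδ₁ : ExpansionFunction R₁ δ₁)
    (δ₂ : Ideal R₂ → Ideal R₂) (hδ₂ : ExpansionFunction R₂ δ₂)
    (δx : Ideal (R₁ × R₂) → Ideal (R₁ × R₂))
    (hδx : ∀ (I₁ : Ideal R₁) (I₂ : Ideal R₂), δx (I₁.prod I₂) = (δ₁ I₁).prod (δ₂ I₂))
    (I : Ideal (R₁ × R₂)) (hIproper : I ≠ ⊤) :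
    (IsOneAbsDeltaPrimary δx I ↔ IsDeltaPrimary δx I) ∧
    (IsDeltaPrimary δx I ↔
      ((∃ I₁ : Ideal R₁, I = I₁.prod ⊤ ∧ IsDeltaPrimary δ₁ I₁) ∨
       (∃ I₂ : Ideal R₂, I = Ideal.prod ⊤ I₂ ∧ IsDeltaPrimary δ₂ I₂) ∨
       (∃ (I₁ : Ideal R₁) (I₂ : Ideal R₂), I = I₁.prod I₂ ∧ I₁ ≠ ⊤ ∧ I₂ ≠ ⊤ ∧
         δ₁ I₁ = ⊤ ∧ δ₂ I₂ = ⊤))) := by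

  -- δ of top is top
  have hδ₁top : δ₁ ⊤ = ⊤ := top_le_iff.mp (hδ₁.1 ⊤)
  have hδ₂top : δ₂ ⊤ = ⊤ := top_le_iff.mp (hδ₂.1 ⊤)
  -- (3) → (2)
  have hA : ((∃ I₁ : Ideal R₁, I = I₁.prod ⊤ ∧ IsDeltaPrimary δ₁ I₁) ∨
       (∃ I₂ : Ideal R₂, I = Ideal.prod ⊤ I₂ ∧ IsDeltaPrimary δ₂ I₂) ∨
       (∃ (I₁ : Ideal R₁) (I₂ : Ideal R₂), I = I₁.prod I₂ ∧ I₁ ≠ ⊤ ∧ I₂ ≠ ⊤ ∧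
         δ₁ I₁ = ⊤ ∧ δ₂ I₂ = ⊤)) → IsDeltaPrimary δx I := by
    rintro (⟨I₁, rfl, hI₁ne, hI₁⟩ | ⟨I₂, rfl, hI₂ne, hI₂⟩ | ⟨I₁, I₂, rfl, hI₁, hI₂, hd₁, hd₂⟩)
    · refine ⟨hIproper, fun a b hab => ?_⟩
      rw [Ideal.mem_prod] at hab
      rcases hI₁ a.1 b.1 hab.1 with h | h
      · exact Or.inl (mem_prod''.mpr ⟨h, Submodule.mem_top⟩)
      · exact Or.inr (by rw [hδx, hδ₂top]; exact mem_prod''.mpr ⟨h, Submodule.mem_top⟩)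
    · refine ⟨hIproper, fun a b hab => ?_⟩
      rw [Ideal.mem_prod] at hab
      rcases hI₂ a.2 b.2 hab.2 with h | h
      · exact Or.inl (mem_prod''.mpr ⟨Submodule.mem_top, h⟩)
      · exact Or.inr (by rw [hδx, hδ₁top]; exact mem_prod''.mpr ⟨Submodule.mem_top, h⟩)
    · refine ⟨hIproper, fun a b _ => Or.inr ?_⟩
      rw [hδx, hd₁, hd₂, Ideal.prod_top_top]
      exact Submodule.mem_top
  -- (2) → (1)
  have hB : IsDeltaPrimary δx I → IsOneAbsDeltaPrimary δx I := by
    rintro ⟨hne, h⟩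
    exact ⟨hne, fun a b c _ _ _ habc => h (a * b) c habc⟩
  -- (1) → (3)
  have hC : IsOneAbsDeltaPrimary δx I →
      ((∃ I₁ : Ideal R₁, I = I₁.prod ⊤ ∧ IsDeltaPrimary δ₁ I₁) ∨
       (∃ I₂ : Ideal R₂, I = Ideal.prod ⊤ I₂ ∧ IsDeltaPrimary δ₂ I₂) ∨
       (∃ (I₁ : Ideal R₁) (I₂ : Ideal R₂), I = I₁.prod I₂ ∧ I₁ ≠ ⊤ ∧ I₂ ≠ ⊤ ∧
         δ₁ I₁ = ⊤ ∧ δ₂ I₂ = ⊤)) := by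
    rintro ⟨hne, h⟩
    set I₁ : Ideal R₁ := Ideal.map (RingHom.fst R₁ R₂) I with hI₁def
    set I₂ : Ideal R₂ := Ideal.map (RingHom.snd R₁ R₂) I with hI₂def
    have hIeq : I = I₁.prod I₂ := Ideal.ideal_prod_eq I
    by_cases h1 : I₁ = ⊤ <;> by_cases h2 : I₂ = ⊤
    · exact absurd (by rw [hIeq, h1, h2, Ideal.prod_top_top]) hIproper
    · -- I₁ = ⊤, I₂ proper: second case
      refine Or.inr (Or.inl ⟨I₂, by rw [hIeq, h1], h2, fun a b hab => ?_⟩)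
      by_cases hua : IsUnit a
      · obtain ⟨c, hc⟩ := isUnit_iff_exists_inv.mp hua
        have : b = c * (a * b) := by rw [← mul_assoc, mul_comm c a, hc, one_mul]
        exact Or.inr (hδ₂.1 I₂ (this ▸ I₂.mul_mem_left c hab))
      by_cases hub : IsUnit b
      · obtain ⟨c, hc⟩ := isUnit_iff_exists_inv.mp hub
        have : a = c * (a * b) := by rw [mul_comm a b, ← mul_assoc, mul_comm c b, hc, one_mul]
        exact Or.inl (this ▸ I₂.mul_mem_left c hab)
      have hmem : ((1 : R₁), a) * ((0 : R₁), (1 : R₂)) * (1, b) ∈ I := by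
        rw [hIeq, h1]
        refine mem_prod''.mpr ⟨Submodule.mem_top, ?_⟩
        simpa using hab
      have hnu1 : ¬ IsUnit ((1 : R₁), a) := fun hu =>
        hua ((isUnit_prod_iff' _).mp hu).2
      have hnu2 : ¬ IsUnit ((0 : R₁), (1 : R₂)) := fun hu =>
        (not_isUnit_zero ((isUnit_prod_iff' _).mp hu).1)
      have hnu3 : ¬ IsUnit ((1 : R₁), b) := fun hu =>
        hub ((isUnit_prod_iff' _).mp hu).2
      rcases h _ _ _ hnu1 hnu2 hnu3 hmem with hm | hm
      · rw [hIeq] at hm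
        have := (mem_prod''.mp hm).2
        simpa using Or.inl this
      · rw [hIeq, hδx] at hm
        have := (mem_prod''.mp hm).2
        simpa using Or.inr this
    · -- I₂ = ⊤, I₁ proper: first case
      refine Or.inl ⟨I₁, by rw [hIeq, h2], h1, fun a b hab => ?_⟩
      by_cases hua : IsUnit a
      · obtain ⟨c, hc⟩ := isUnit_iff_exists_inv.mp hua
        have : b = c * (a * b) := by rw [← mul_assoc, mul_comm c a, hc, one_mul]
        exact Or.inr (hδ₁.1 I₁ (this ▸ I₁.mul_mem_left c hab))
      by_cases hub : IsUnit b
      · obtain ⟨c, hc⟩ := isUnit_iff_exists_inv.mp hub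
        have : a = c * (a * b) := by rw [mul_comm a b, ← mul_assoc, mul_comm c b, hc, one_mul]
        exact Or.inl (this ▸ I₁.mul_mem_left c hab)
      have hmem : (a, (1 : R₂)) * ((1 : R₁), (0 : R₂)) * (b, 1) ∈ I := by
        rw [hIeq, h2]
        refine mem_prod''.mpr ⟨?_, Submodule.mem_top⟩
        simpa using hab
      have hnu1 : ¬ IsUnit (a, (1 : R₂)) := fun hu =>
        hua ((isUnit_prod_iff' _).mp hu).1
      have hnu2 : ¬ IsUnit ((1 : R₁), (0 : R₂)) := fun hu =>
        (not_isUnit_zero ((isUnit_prod_iff' _).mp hu).2)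
      have hnu3 : ¬ IsUnit (b, (1 : R₂)) := fun hu =>
        hub ((isUnit_prod_iff' _).mp hu).1
      rcases h _ _ _ hnu1 hnu2 hnu3 hmem with hm | hm
      · rw [hIeq] at hm
        have := (mem_prod''.mp hm).1
        simpa using Or.inl this
      · rw [hIeq, hδx] at hm
        have := (mem_prod''.mp hm).1
        simpa using Or.inr this
    · -- both proper: third case
      refine Or.inr (Or.inr ⟨I₁, I₂, hIeq, h1, h2, ?_, ?_⟩)
      · -- δ₁ I₁ = ⊤ using a = b = (0,1), c = (1,0)
        have hmem : ((0 : R₁), (1 : R₂)) * ((0 : R₁), (1 : R₂)) * (1, 0) ∈ I := by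
          rw [hIeq]
          refine mem_prod''.mpr ⟨by simpa using I₁.zero_mem, by simpa using I₂.zero_mem⟩
        have hnu1 : ¬ IsUnit ((0 : R₁), (1 : R₂)) := fun hu =>
          not_isUnit_zero ((isUnit_prod_iff' _).mp hu).1
        have hnu3 : ¬ IsUnit ((1 : R₁), (0 : R₂)) := fun hu =>
          not_isUnit_zero ((isUnit_prod_iff' _).mp hu).2
        rcases h _ _ _ hnu1 hnu1 hnu3 hmem with hm | hm
        · rw [hIeq] at hm
          have := (mem_prod''.mp hm).2
          simp at this
          exact absurd (Ideal.eq_top_iff_one _ |>.mpr this) h2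
        · rw [hIeq, hδx] at hm
          have := (mem_prod''.mp hm).1
          exact Ideal.eq_top_iff_one _ |>.mpr this
      · have hmem : ((1 : R₁), (0 : R₂)) * ((1 : R₁), (0 : R₂)) * (0, 1) ∈ I := by
          rw [hIeq]
          refine mem_prod''.mpr ⟨by simpa using I₁.zero_mem, by simpa using I₂.zero_mem⟩
        have hnu1 : ¬ IsUnit ((1 : R₁), (0 : R₂)) := fun hu =>
          not_isUnit_zero ((isUnit_prod_iff' _).mp hu).2
        have hnu3 : ¬ IsUnit ((0 : R₁), (1 : R₂)) := fun hu =>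
          not_isUnit_zero ((isUnit_prod_iff' _).mp hu).1
        rcases h _ _ _ hnu1 hnu1 hnu3 hmem with hm | hm
        · rw [hIeq] at hm
          have := (mem_prod''.mp hm).1
          simp at this
          exact absurd (Ideal.eq_top_iff_one _ |>.mpr this) h1
        · rw [hIeq, hδx] at hm
          have := (mem_prod''.mp hm).2
          exact Ideal.eq_top_iff_one _ |>.mpr this
  exact ⟨⟨fun h => hA (hC h), hB⟩, ⟨fun h => hC (hB h), hA⟩⟩
end
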